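/- Let NN be a K-way, L-layer fully-connected network (L ≥ 2) with weight matrices w_1,…,w_L, bias vectors b_1,…,b_L, and componentwise activation f : ℝ → ℝ Lipschitz with constant C ≥ 0, whose logits are θ(x) = w_L h_{L−1}(x) + b_L, and whose output layer additionally applies a squeezing function f_s : ℝ → ℝ, Lipschitz with constant C_s ≥ 0, before softmax: NN(x)_k = exp(f_s(θ_k(x))) / Σ_{p=1}^K exp(f_s(θ_p(x))). Let ξ be a perturbation vector and set η' = C_s · C^{L−1} · max_{k=1,…,K} (|w_L|·|w_{L−1}|⋯|w_1|·|ξ|)_k, where |·| denotes entrywise absolute value. Then for every k, |NN(x)_k − NN(x+ξ)_k| ≤ exp(f_s(θ_k(x))) · (e^{η'} − e^{−η'}) / Σ_{p=1}^K exp(f_s(θ_p(x+ξ))). -/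
import Mathlib


/-- Hidden states of a fully-connected network: `hiddenState dims w b f i x` is `h_i(x)`,
with `h_0(x) = x` and `h_{i+1}(x) = f ∘ (w_{i+1} h_i(x) + b_{i+1})` (the paper's `w_{i+1}`
is `w i` here, i.e. the paper's 1-indexed `w_i` is the 0-indexed `w (i-1)`). -/
def hiddenState (dims : ℕ → ℕ)
    (w : (i : ℕ) → Matrix (Fin (dims (i + 1))) (Fin (dims i)) ℝ)
    (b : (i : ℕ) → Fin (dims (i + 1)) → ℝ) (f : ℝ → ℝ) :
    (i : ℕ) → (Fin (dims 0) → ℝ) → (Fin (dims i) → ℝ)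
  | 0, x => x
  | i + 1, x => fun j => f ((w i).mulVec (hiddenState dims w b f i x) j + b i j)

/-- `absChain dims w ξ i = |w_i|·|w_{i-1}|⋯|w_1|·|ξ|` (entrywise absolute values),
a vector of size `dims i`; the base case is `|ξ|`. -/
def absChain (dims : ℕ → ℕ)
    (w : (i : ℕ) → Matrix (Fin (dims (i + 1))) (Fin (dims i)) ℝ)
    (ξ : Fin (dims 0) → ℝ) :
    (i : ℕ) → (Fin (dims i) → ℝ)
  | 0 => fun j => |ξ j|
  | i + 1 => ((w i).map (fun a => |a|)).mulVec (absChain dims w ξ i)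

lemma hidden_diff_bound (dims : ℕ → ℕ)
    (w : (i : ℕ) → Matrix (Fin (dims (i + 1))) (Fin (dims i)) ℝ)
    (b : (i : ℕ) → Fin (dims (i + 1)) → ℝ)
    (f : ℝ → ℝ) (C : ℝ) (hC : 0 ≤ C)
    (hf : ∀ s t : ℝ, |f s - f t| ≤ C * |s - t|)
    (x ξ : Fin (dims 0) → ℝ) :
    ∀ i j, |hiddenState dims w b f i x j - hiddenState dims w b f i (x + ξ) j| ≤
      C ^ i * absChain dims w ξ i j := by
  intro i
  induction i with
  | zero =>
    intro j
    simp only [hiddenState, absChain, pow_zero, one_mul, Pi.add_apply]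
    rw [show x j - (x j + ξ j) = -(ξ j) by ring, abs_neg]
  | succ i ih =>
    intro j
    simp only [hiddenState]
    have h1 : ((w i).mulVec (hiddenState dims w b f i x) j + b i j)
        - ((w i).mulVec (hiddenState dims w b f i (x + ξ)) j + b i j)
        = ∑ l, w i j l * (hiddenState dims w b f i x l - hiddenState dims w b f i (x + ξ) l) := by
      simp [Matrix.mulVec, dotProduct, mul_sub, Finset.sum_sub_distrib]
    calc |f ((w i).mulVec (hiddenState dims w b f i x) j + b i j)
          - f ((w i).mulVec (hiddenState dims w b f i (x + ξ)) j + b i j)|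
        ≤ C * |((w i).mulVec (hiddenState dims w b f i x) j + b i j)
          - ((w i).mulVec (hiddenState dims w b f i (x + ξ)) j + b i j)| := hf _ _
      _ ≤ C * ∑ l, |w i j l| * (C ^ i * absChain dims w ξ i l) := by
          apply mul_le_mul_of_nonneg_left _ hC
          rw [h1]
          refine (Finset.abs_sum_le_sum_abs _ _).trans ?_
          apply Finset.sum_le_sum
          intro l _
          rw [abs_mul]
          exact mul_le_mul_of_nonneg_left (ih l) (abs_nonneg _)
      _ = C ^ (i + 1) * absChain dims w ξ (i + 1) j := by
          simp only [absChain, Matrix.mulVec, dotProduct, Matrix.map_apply,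
            Finset.mul_sum]
          exact Finset.sum_congr rfl fun l _ => by ring

/-- As in Statement 1, but the output layer additionally applies a
squeezing function `f_s : ℝ → ℝ`, Lipschitz with constant `C_s ≥ 0`, before softmax:
`NN(x)_k = exp(f_s(θ_k(x))) / ∑_p exp(f_s(θ_p(x)))`. With
`η' = C_s · C^{L-1} · max_k (|w_L|·|w_{L-1}|⋯|w_1|·|ξ|)_k`, for every `k`,
`|NN(x)_k − NN(x+ξ)_k| ≤ exp(f_s(θ_k(x)))·(e^{η'} − e^{−η'}) / ∑_p exp(f_s(θ_p(x+ξ)))`. -/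
theorem squeezed_softmax_output_variation_bound (L : ℕ) (hL : 2 ≤ L) (dims : ℕ → ℕ)
    (hK : 0 < dims (L - 1 + 1))
    (w : (i : ℕ) → Matrix (Fin (dims (i + 1))) (Fin (dims i)) ℝ)
    (b : (i : ℕ) → Fin (dims (i + 1)) → ℝ)
    (f : ℝ → ℝ) (C : ℝ) (hC : 0 ≤ C)
    (hf : ∀ s t : ℝ, |f s - f t| ≤ C * |s - t|)
    (fs : ℝ → ℝ) (Cs : ℝ) (hCs : 0 ≤ Cs)
    (hfs : ∀ s t : ℝ, |fs s - fs t| ≤ Cs * |s - t|)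
    (θ : (Fin (dims 0) → ℝ) → Fin (dims (L - 1 + 1)) → ℝ)
    (hθ : ∀ y k, θ y k =
      (w (L - 1)).mulVec (hiddenState dims w b f (L - 1) y) k + b (L - 1) k)
    (NN : (Fin (dims 0) → ℝ) → Fin (dims (L - 1 + 1)) → ℝ)
    (hNN : ∀ y k, NN y k = Real.exp (fs (θ y k)) / ∑ p, Real.exp (fs (θ y p)))
    (x ξ : Fin (dims 0) → ℝ) (η' : ℝ)
    (hη' : η' = Cs * C ^ (L - 1) * Finset.univ.sup'
        (Finset.univ_nonempty_iff.mpr (Fin.pos_iff_nonempty.mp hK))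
        (fun k => absChain dims w ξ (L - 1 + 1) k)) :
    ∀ k : Fin (dims (L - 1 + 1)),
      |NN x k - NN (x + ξ) k| ≤
        Real.exp (fs (θ x k)) * (Real.exp η' - Real.exp (-η')) /
          ∑ p, Real.exp (fs (θ (x + ξ) p)) := by
  intro k
  have ne : (Finset.univ : Finset (Fin (dims (L - 1 + 1)))).Nonempty :=
    Finset.univ_nonempty_iff.mpr (Fin.pos_iff_nonempty.mp hK)
  -- bound on logit variation
  have hθd : ∀ p, |θ x p - θ (x + ξ) p| ≤ C ^ (L - 1) * absChain dims w ξ (L - 1 + 1) p := by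
    intro p
    rw [hθ x p, hθ (x + ξ) p]
    have h1 : ((w (L - 1)).mulVec (hiddenState dims w b f (L - 1) x) p + b (L - 1) p)
        - ((w (L - 1)).mulVec (hiddenState dims w b f (L - 1) (x + ξ)) p + b (L - 1) p)
        = ∑ l, w (L - 1) p l * (hiddenState dims w b f (L - 1) x l - hiddenState dims w b f (L - 1) (x + ξ) l) := by
      simp only [Matrix.mulVec, dotProduct, mul_sub, Finset.sum_sub_distrib]
      ring
    rw [h1]
    refine (Finset.abs_sum_le_sum_abs _ _).trans ?_
    calc ∑ l, |w (L - 1) p l * (hiddenState dims w b f (L - 1) x l - hiddenState dims w b f (L - 1) (x + ξ) l)|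
        ≤ ∑ l, |w (L - 1) p l| * (C ^ (L - 1) * absChain dims w ξ (L - 1) l) := by
          apply Finset.sum_le_sum
          intro l _
          rw [abs_mul]
          exact mul_le_mul_of_nonneg_left
            (hidden_diff_bound dims w b f C hC hf x ξ (L - 1) l) (abs_nonneg _)
      _ = C ^ (L - 1) * absChain dims w ξ (L - 1 + 1) p := by
          simp only [absChain, Matrix.mulVec, dotProduct, Matrix.map_apply,
            Finset.mul_sum]
          exact Finset.sum_congr rfl fun l _ => by ring
  have hfsd : ∀ p, |fs (θ x p) - fs (θ (x + ξ) p)| ≤ η' := by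
    intro p
    calc |fs (θ x p) - fs (θ (x + ξ) p)| ≤ Cs * |θ x p - θ (x + ξ) p| := hfs _ _
      _ ≤ Cs * (C ^ (L - 1) * absChain dims w ξ (L - 1 + 1) p) :=
          mul_le_mul_of_nonneg_left (hθd p) hCs
      _ ≤ Cs * (C ^ (L - 1) * Finset.univ.sup' ne (fun q => absChain dims w ξ (L - 1 + 1) q)) :=
          mul_le_mul_of_nonneg_left (mul_le_mul_of_nonneg_left
            (Finset.le_sup' (fun q => absChain dims w ξ (L - 1 + 1) q) (Finset.mem_univ p))
            (pow_nonneg hC _)) hCs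
      _ = η' := by rw [hη']; ring
  have hη0 : 0 ≤ η' := le_trans (abs_nonneg _) (hfsd k)
  have hub : ∀ p, Real.exp (fs (θ (x + ξ) p)) ≤ Real.exp η' * Real.exp (fs (θ x p)) := by
    intro p
    rw [← Real.exp_add]
    exact Real.exp_le_exp.mpr (by linarith [(abs_le.mp (hfsd p)).1])
  have hlb : ∀ p, Real.exp (-η') * Real.exp (fs (θ x p)) ≤ Real.exp (fs (θ (x + ξ) p)) := by
    intro p
    rw [← Real.exp_add]
    exact Real.exp_le_exp.mpr (by linarith [(abs_le.mp (hfsd p)).2])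
  set S := ∑ p, Real.exp (fs (θ x p)) with hS_def
  set S' := ∑ p, Real.exp (fs (θ (x + ξ) p)) with hS'_def
  have hS : 0 < S := Finset.sum_pos (fun p _ => Real.exp_pos _) ne
  have hS' : 0 < S' := Finset.sum_pos (fun p _ => Real.exp_pos _) ne
  have hSub : S' ≤ Real.exp η' * S := by
    rw [hS_def, hS'_def, Finset.mul_sum]
    exact Finset.sum_le_sum fun p _ => hub p
  have hSlb : Real.exp (-η') * S ≤ S' := by
    rw [hS_def, hS'_def, Finset.mul_sum]
    exact Finset.sum_le_sum fun p _ => hlb p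
  set a := Real.exp (fs (θ x k)) with ha_def
  set a' := Real.exp (fs (θ (x + ξ) k)) with ha'_def
  have ha : 0 < a := Real.exp_pos _
  rw [hNN x k, hNN (x + ξ) k, ← hS_def, ← hS'_def, ← ha_def, ← ha'_def]
  rw [div_sub_div _ _ hS.ne' hS'.ne', abs_div, abs_of_pos (mul_pos hS hS'),
    div_le_div_iff₀ (mul_pos hS hS') hS']
  have key : |a * S' - S * a'| ≤ a * (Real.exp η' - Real.exp (-η')) * S := by
    have u1 : a * S' ≤ a * (Real.exp η' * S) := mul_le_mul_of_nonneg_left hSub ha.le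
    have u2 : S * (Real.exp (-η') * a) ≤ S * a' := mul_le_mul_of_nonneg_left (hlb k) hS.le
    have l1 : a * (Real.exp (-η') * S) ≤ a * S' := mul_le_mul_of_nonneg_left hSlb ha.le
    have l2 : S * a' ≤ S * (Real.exp η' * a) := mul_le_mul_of_nonneg_left (hub k) hS.le
    rw [abs_le]
    constructor <;> nlinarith
  calc |a * S' - S * a'| * S' ≤ (a * (Real.exp η' - Real.exp (-η')) * S) * S' :=
        mul_le_mul_of_nonneg_right key hS'.le
    _ = a * (Real.exp η' - Real.exp (-η')) * (S * S') := by ring
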